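/- Assume the pair (ζ, n) satisfies condition (★) with respect to (m, v_0, v_1, ℓ, ζ⁰). Let X be an ADHM representation with dim V_∞ = 1, dim V_0 = v_0 and dim V_1 = v_1, and let F• be a full flag of V_1 of length N = v_1. Let T be a proper submodule of X with T_∞ = V_∞ and (m+1)·(v_0 − dim T_0) = m·(v_1 − dim T_1). Then μ_{ζ,n}(T) ≠ μ_{ζ,n}(X), and μ_{ζ,n}(T) < μ_{ζ,n}(X) holds if and only if F^ℓ ⊄ T_1. -/

import Mathlib

open Module


section ADHMPrelim

/-- An ADHM representation on the blow-up quiver: vector spaces `V0, V1, Vinf` and maps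
`B1 B2 : V1 → V0`, `d : V0 → V1`, and `r`-tuples of maps `i : Vinf → V0`, `j : V1 → Vinf`
(encoding `i : Vinf ⊗ ℂ^r → V0` and `j : V1 → Vinf ⊗ ℂ^r`), satisfying the ADHM relation
`B1 ∘ d ∘ B2 - B2 ∘ d ∘ B1 + i ∘ j = 0`. -/
structure ADHMData (r : ℕ) (V0 V1 Vinf : Type*)
    [AddCommGroup V0] [Module ℂ V0] [AddCommGroup V1] [Module ℂ V1]
    [AddCommGroup Vinf] [Module ℂ Vinf] where
  B1 : V1 →ₗ[ℂ] V0
  B2 : V1 →ₗ[ℂ] V0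
  d : V0 →ₗ[ℂ] V1
  i : Fin r → (Vinf →ₗ[ℂ] V0)
  j : Fin r → (V1 →ₗ[ℂ] Vinf)
  rel : B1 ∘ₗ d ∘ₗ B2 - B2 ∘ₗ d ∘ₗ B1 + ∑ k : Fin r, (i k) ∘ₗ (j k) = 0

variable {r : ℕ} {V0 V1 Vinf : Type*}
  [AddCommGroup V0] [Module ℂ V0] [AddCommGroup V1] [Module ℂ V1]
  [AddCommGroup Vinf] [Module ℂ Vinf]

/-- A submodule of an ADHM representation: a triple of subspaces invariant under all the
structure maps. -/
structure ADHMSub (X : ADHMData r V0 V1 Vinf) where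
  S0 : Submodule ℂ V0
  S1 : Submodule ℂ V1
  Sinf : Submodule ℂ Vinf
  hB1 : ∀ x ∈ S1, X.B1 x ∈ S0
  hB2 : ∀ x ∈ S1, X.B2 x ∈ S0
  hd : ∀ x ∈ S0, X.d x ∈ S1
  hi : ∀ (k : Fin r), ∀ x ∈ Sinf, X.i k x ∈ S0
  hj : ∀ (k : Fin r), ∀ x ∈ S1, X.j k x ∈ Sinf

namespace ADHMSub

variable {X : ADHMData r V0 V1 Vinf}

/-- `rank S = dim S0 + dim S1 + dim S∞`, as a rational number. -/
noncomputable def rank (S : ADHMSub X) : ℚ :=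
  (finrank ℂ S.S0 : ℚ) + (finrank ℂ S.S1 : ℚ) + (finrank ℂ S.Sinf : ℚ)

/-- `ζ·vdim S = ζ₀ dim S0 + ζ₁ dim S1 + ζ∞ dim S∞`. -/
noncomputable def zdeg (ζ : ℚ × ℚ × ℚ) (S : ADHMSub X) : ℚ :=
  ζ.1 * (finrank ℂ S.S0 : ℚ) + ζ.2.1 * (finrank ℂ S.S1 : ℚ) + ζ.2.2 * (finrank ℂ S.Sinf : ℚ)

/-- The slope `μ_{ζ,n}(S)` of a submodule with respect to a flag `F` of length `N`. -/
noncomputable def mu (ζ : ℚ × ℚ × ℚ) (n : ℕ → ℚ) (N : ℕ) (F : ℕ → Submodule ℂ V1)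
    (S : ADHMSub X) : ℚ :=
  (S.zdeg ζ + ∑ k ∈ Finset.Icc 1 N, n k * (finrank ℂ ↥(S.S1 ⊓ F k) : ℚ)) / S.rank

/-- A submodule is nonzero if one of its components is nonzero. -/
def IsNonzero (S : ADHMSub X) : Prop := S.S0 ≠ ⊥ ∨ S.S1 ≠ ⊥ ∨ S.Sinf ≠ ⊥

/-- A submodule is proper if one of its components is a proper subspace. -/
def IsProper (S : ADHMSub X) : Prop := S.S0 ≠ ⊤ ∨ S.S1 ≠ ⊤ ∨ S.Sinf ≠ ⊤

end ADHMSub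

/-- The whole representation, viewed as a submodule of itself. -/
def ADHMData.top (X : ADHMData r V0 V1 Vinf) : ADHMSub X where
  S0 := ⊤
  S1 := ⊤
  Sinf := ⊤
  hB1 := fun _ _ => Submodule.mem_top
  hB2 := fun _ _ => Submodule.mem_top
  hd := fun _ _ => Submodule.mem_top
  hi := fun _ _ _ => Submodule.mem_top
  hj := fun _ _ _ => Submodule.mem_top

/-- A flag of `V1` of length `N`: increasing with 1-dimensional (or zero) steps. -/
structure IsFlag (N : ℕ) (F : ℕ → Submodule ℂ V1) : Prop where
  bot : F 0 = ⊥
  top : F N = ⊤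
  mono : ∀ k < N, F k ≤ F (k + 1)
  step : ∀ k < N, finrank ℂ ↥(F (k + 1)) ≤ finrank ℂ ↥(F k) + 1

/-- A full flag of `V1` of length `N`: increasing with exactly 1-dimensional steps. -/
structure IsFullFlag (N : ℕ) (F : ℕ → Submodule ℂ V1) : Prop where
  bot : F 0 = ⊥
  top : F N = ⊤
  mono : ∀ k < N, F k ≤ F (k + 1)
  dim : ∀ k ≤ N, finrank ℂ ↥(F k) = k

/-- `(ζ,n)`-stability of the pair `(X, F)`. -/
def PairStable (X : ADHMData r V0 V1 Vinf) (ζ : ℚ × ℚ × ℚ) (n : ℕ → ℚ) (N : ℕ)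
    (F : ℕ → Submodule ℂ V1) : Prop :=
  ∀ S : ADHMSub X, S.IsNonzero → S.IsProper → S.mu ζ n N F < X.top.mu ζ n N F

/-- `(ζ,n)`-semistability of the pair `(X, F)`. -/
def PairSemistable (X : ADHMData r V0 V1 Vinf) (ζ : ℚ × ℚ × ℚ) (n : ℕ → ℚ) (N : ℕ)
    (F : ℕ → Submodule ℂ V1) : Prop :=
  ∀ S : ADHMSub X, S.IsNonzero → S.IsProper → S.mu ζ n N F ≤ X.top.mu ζ n N F

namespace ADHMSub

variable {X : ADHMData r V0 V1 Vinf}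

/-- The ADHM representation obtained by restricting all structure maps to a submodule. -/
def subRep (S : ADHMSub X) : ADHMData r S.S0 S.S1 S.Sinf where
  B1 := X.B1.restrict S.hB1
  B2 := X.B2.restrict S.hB2
  d := X.d.restrict S.hd
  i := fun k => (X.i k).restrict (S.hi k)
  j := fun k => (X.j k).restrict (S.hj k)
  rel := by
    ext x
    have hx := LinearMap.congr_fun X.rel (x : V1)
    simp only [LinearMap.add_apply, LinearMap.sub_apply, LinearMap.coe_comp,
      Function.comp_apply, LinearMap.sum_apply, LinearMap.zero_apply] at hx
    simp only [LinearMap.add_apply, LinearMap.sub_apply, LinearMap.coe_comp,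
      Function.comp_apply, LinearMap.sum_apply, LinearMap.zero_apply,
      AddSubmonoidClass.coe_finset_sum, AddSubgroupClass.coe_sub, Submodule.coe_add,
      LinearMap.restrict_coe_apply, ZeroMemClass.coe_zero]
    exact hx

/-- The quotient ADHM representation of `X` by a submodule `S`. -/
def quotRep (S : ADHMSub X) : ADHMData r (V0 ⧸ S.S0) (V1 ⧸ S.S1) (Vinf ⧸ S.Sinf) where
  B1 := Submodule.mapQ S.S1 S.S0 X.B1 (fun x hx => S.hB1 x hx)
  B2 := Submodule.mapQ S.S1 S.S0 X.B2 (fun x hx => S.hB2 x hx)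
  d := Submodule.mapQ S.S0 S.S1 X.d (fun x hx => S.hd x hx)
  i := fun k => Submodule.mapQ S.Sinf S.S0 (X.i k) (fun x hx => S.hi k x hx)
  j := fun k => Submodule.mapQ S.S1 S.Sinf (X.j k) (fun x hx => S.hj k x hx)
  rel := by
    refine Submodule.linearMap_qext _ ?_
    ext x
    have hx := LinearMap.congr_fun X.rel x
    simp only [LinearMap.add_apply, LinearMap.sub_apply, LinearMap.coe_comp,
      Function.comp_apply, LinearMap.sum_apply, LinearMap.zero_apply] at hx
    simp only [LinearMap.add_apply, LinearMap.sub_apply, LinearMap.coe_comp,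
      Function.comp_apply, LinearMap.sum_apply, LinearMap.zero_apply,
      Submodule.mkQ_apply, Submodule.mapQ_apply]
    have hsum : (∑ k : Fin r, Submodule.Quotient.mk (p := S.S0) (X.i k (X.j k x)))
        = Submodule.Quotient.mk (∑ k : Fin r, X.i k (X.j k x)) := by
      rw [← Submodule.mkQ_apply, map_sum]
      simp [Submodule.mkQ_apply]
    rw [hsum, ← Submodule.Quotient.mk_sub, ← Submodule.Quotient.mk_add, hx,
      Submodule.Quotient.mk_zero]

end ADHMSub

end ADHMPrelim


section StarPrelim

/-- `ζ·s` for a triple of rationals and a triple of naturals. -/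
def zdot (z : ℚ × ℚ × ℚ) (s : ℕ × ℕ × ℕ) : ℚ :=
  z.1 * s.1 + z.2.1 * s.2.1 + z.2.2 * s.2.2

/-- `rank s = s₀ + s₁ + s∞`. -/
def srank (s : ℕ × ℕ × ℕ) : ℚ := (s.1 : ℚ) + (s.2.1 : ℚ) + (s.2.2 : ℚ)

/-- The finite set `D` of dimension triples `s ≠ 0` with `0 ≤ s₀ ≤ v₀`, `0 ≤ s₁ ≤ v₁`,
`s∞ ∈ {0,1}` and `ζ⁰·s ≠ 0`. -/
def Dset (v0 v1 : ℕ) (z0 : ℚ × ℚ × ℚ) : Finset (ℕ × ℕ × ℕ) :=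
  (Finset.Iic v0 ×ˢ Finset.Iic v1 ×ˢ Finset.Iic 1).filter
    (fun s => s ≠ (0, 0, 0) ∧ zdot z0 s ≠ 0)

/-- Condition (★) on the stability parameter `(ζ, n)`, relative to `(m, v₀, v₁, ℓ, ζ⁰)`. -/
def SatisfiesStar (m v0 v1 ℓ : ℕ) (z0 ζ : ℚ × ℚ × ℚ) (n : ℕ → ℚ) : Prop :=
  -- (a)
  ζ.1 * (v0 : ℚ) + ζ.2.1 * (v1 : ℚ) + ζ.2.2 = 0 ∧
  -- (b)
  (∀ k ∈ Finset.Icc 1 (v1 - 1),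
      ((v0 : ℚ) + (v1 : ℚ) + 1) * ∑ i ∈ Finset.Icc (k + 1) v1, (i : ℚ) * n i < n k ∧
      0 < ((v0 : ℚ) + (v1 : ℚ) + 1) * ∑ i ∈ Finset.Icc (k + 1) v1, (i : ℚ) * n i) ∧
  -- (c)
  (∀ s ∈ Dset v0 v1 z0, ∀ s' ∈ Dset v0 v1 z0,
      |zdot z0 s - zdot ζ s| / srank s + ∑ i ∈ Finset.Icc 1 v1, (i : ℚ) * n i
        < |zdot z0 s'| / srank s') ∧
  -- (d)
  (0 < (∑ i ∈ Finset.Icc 1 ℓ, (i : ℚ) * n i)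
        - (((v0 : ℚ) + (v1 : ℚ) + 1) / (2 * (m : ℚ) + 1))
          * ((m : ℚ) * ζ.1 + ((m : ℚ) + 1) * ζ.2.1) ∧
   (∑ i ∈ Finset.Icc 1 ℓ, (i : ℚ) * n i)
        - (((v0 : ℚ) + (v1 : ℚ) + 1) / (2 * (m : ℚ) + 1))
          * ((m : ℚ) * ζ.1 + ((m : ℚ) + 1) * ζ.2.1) < n ℓ) ∧
  -- (e)
  ((v0 : ℚ) + (v1 : ℚ) + 1) * ∑ i ∈ Finset.Icc (ℓ + 1) v1, (i : ℚ) * n i <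
      min ((∑ i ∈ Finset.Icc 1 ℓ, (i : ℚ) * n i)
            - (((v0 : ℚ) + (v1 : ℚ) + 1) / (2 * (m : ℚ) + 1))
              * ((m : ℚ) * ζ.1 + ((m : ℚ) + 1) * ζ.2.1))
          ((n ℓ - ∑ i ∈ Finset.Icc 1 ℓ, (i : ℚ) * n i)
            + (((v0 : ℚ) + (v1 : ℚ) + 1) / (2 * (m : ℚ) + 1))
              * ((m : ℚ) * ζ.1 + ((m : ℚ) + 1) * ζ.2.1))

end StarPrelim


section AuxForMain

private lemma icc_split_sum' {M : Type*} [AddCommMonoid M] (g : ℕ → M) {a b : ℕ} (h : a ≤ b) :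
    ∑ k ∈ Finset.Icc 1 b, g k = (∑ k ∈ Finset.Icc 1 a, g k) + ∑ k ∈ Finset.Icc (a + 1) b, g k := by
  have e1 : Finset.Icc 1 b = Finset.Ioc 0 b := by
    ext x; simp only [Finset.mem_Icc, Finset.mem_Ioc]; omega
  have e2 : Finset.Icc 1 a = Finset.Ioc 0 a := by
    ext x; simp only [Finset.mem_Icc, Finset.mem_Ioc]; omega
  have e3 : Finset.Icc (a + 1) b = Finset.Ioc a b := by
    ext x; simp only [Finset.mem_Icc, Finset.mem_Ioc]; omega
  rw [e1, e2, e3, Finset.sum_Ioc_consecutive g (Nat.zero_le a) h]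

private lemma fullflag_mono' {V : Type*} [AddCommGroup V] [Module ℂ V]
    {N : ℕ} {F : ℕ → Submodule ℂ V} (hF : IsFullFlag N F) :
    ∀ j k : ℕ, j ≤ k → k ≤ N → F j ≤ F k := by
  intro j k hjk hk
  induction k with
  | zero =>
    obtain rfl : j = 0 := Nat.le_zero.mp hjk
    exact le_rfl
  | succ k ih =>
    rcases eq_or_lt_of_le hjk with h | h
    · exact le_of_eq (by rw [h])
    · exact (ih (by omega) (by omega)).trans (hF.mono k (by omega))

private lemma pt_eq (x l c : ℚ) (h : c + 1 ≤ l) (hx : 0 < x) : x * c + x ≤ l * x := by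
  nlinarith

private lemma pt_ne (x k c : ℚ) (h : c ≤ k) (hx : 0 < x) : x * c ≤ k * x := by
  nlinarith

private lemma main_arith_pos (rk ρ Z S A B e : ℚ)
    (hZ : rk * Z = -(rk - ρ) * e)
    (hSA : A ≤ S) (hd1 : 0 < A - e) (he1 : rk * B < A - e)
    (hgap : 1 ≤ rk - ρ) (hrk : 0 < rk) (hB : 0 ≤ B) :
    (A + B) * ρ < (Z + S) * rk := by
  nlinarith [mul_le_mul_of_nonneg_left hSA hrk.le,
    mul_nonneg (by linarith : (0:ℚ) ≤ rk - ρ - 1) hd1.le,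
    mul_le_mul_of_nonneg_right (by linarith : ρ ≤ rk) hB]

private lemma main_arith_neg (rk ρ Z S A B e nl : ℚ)
    (hZ : rk * Z = -(rk - ρ) * e)
    (hSB : S ≤ A + B - nl) (hd1 : 0 < A - e) (hd2 : A - e < nl)
    (he2 : rk * B < nl - A + e)
    (hgap : 1 ≤ rk - ρ) (hρ : 0 < ρ) (hrk1 : 1 < rk) (hB : 0 ≤ B) :
    (Z + S) * rk < (A + B) * ρ := by
  nlinarith [mul_le_mul_of_nonneg_left hSB (by linarith : (0:ℚ) ≤ rk),
    mul_nonneg hρ.le (by linarith : (0:ℚ) ≤ (A - e) + B),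
    mul_nonneg (by linarith : (0:ℚ) ≤ rk - 1) (by linarith : (0:ℚ) ≤ nl - (A - e))]

end AuxForMain

/-- Under condition (★): for a proper submodule `T` with `T∞ = V∞` lying on the wall
`(m+1)·(v₀ − dim T₀) = m·(v₁ − dim T₁)`, the slope of `T` never equals that of `X`, and it
is smaller iff `F^ℓ ⊄ T₁`. -/
theorem mu_lt_iff_flag_not_le
    (r m v0 v1 ℓ : ℕ) (hr : 1 ≤ r) (hv0 : 1 ≤ v0) (hv1 : 1 ≤ v1)
    (hℓ : ℓ ∈ Finset.Icc 1 v1)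
    (z0 ζ : ℚ × ℚ × ℚ) (n : ℕ → ℚ)
    (hz0 : z0.1 < 0)
    (hwall : (m : ℚ) * z0.1 + ((m : ℚ) + 1) * z0.2.1 = 0)
    (hnorm : z0.1 * (v0 : ℚ) + z0.2.1 * (v1 : ℚ) + z0.2.2 = 0)
    (hn : ∀ k ∈ Finset.Icc 1 v1, 0 < n k)
    (hstar : SatisfiesStar m v0 v1 ℓ z0 ζ n)
    {V0 V1 Vinf : Type*} [AddCommGroup V0] [Module ℂ V0] [FiniteDimensional ℂ V0]
    [AddCommGroup V1] [Module ℂ V1] [FiniteDimensional ℂ V1]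
    [AddCommGroup Vinf] [Module ℂ Vinf] [FiniteDimensional ℂ Vinf]
    (X : ADHMData r V0 V1 Vinf)
    (hV0 : finrank ℂ V0 = v0) (hV1 : finrank ℂ V1 = v1) (hVinf : finrank ℂ Vinf = 1)
    (F : ℕ → Submodule ℂ V1) (hF : IsFullFlag v1 F)
    (T : ADHMSub X) (hTpr : T.IsProper) (hTinf : T.Sinf = ⊤)
    (hTwall : ((m : ℤ) + 1) * ((finrank ℂ V0 : ℤ) - (finrank ℂ T.S0 : ℤ)) =
      (m : ℤ) * ((finrank ℂ V1 : ℤ) - (finrank ℂ T.S1 : ℤ))) :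
    T.mu ζ n v1 F ≠ X.top.mu ζ n v1 F ∧
    (T.mu ζ n v1 F < X.top.mu ζ n v1 F ↔ ¬ F ℓ ≤ T.S1) := by
  classical
  obtain ⟨ha, -, -, ⟨hd1, hd2⟩, he⟩ := hstar
  obtain ⟨he1, he2⟩ := lt_min_iff.mp he
  obtain ⟨hℓ1, hℓ2⟩ := Finset.mem_Icc.mp hℓ
  have hFmono := fullflag_mono' hF
  -- dimension facts
  have htinf : finrank ℂ T.Sinf = 1 := by rw [hTinf, finrank_top, hVinf]
  have ht0le : finrank ℂ T.S0 ≤ v0 := hV0 ▸ T.S0.finrank_le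
  have ht1le : finrank ℂ T.S1 ≤ v1 := hV1 ▸ T.S1.finrank_le
  have ht1lt : finrank ℂ T.S1 < v1 := by
    rcases lt_or_eq_of_le ht1le with h | h
    · exact h
    · exfalso
      have h' := hTwall
      rw [hV0, hV1, h] at h'
      simp only [sub_self, mul_zero] at h'
      have h0 : ((v0 : ℤ) - (finrank ℂ T.S0 : ℤ)) = 0 := by
        rcases mul_eq_zero.mp h' with h2 | h2
        · exfalso; omega
        · exact h2
      have ht0 : finrank ℂ T.S0 = v0 := by omega
      have hS0 : T.S0 = ⊤ := Submodule.eq_top_of_finrank_eq (by rw [ht0, hV0])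
      have hS1 : T.S1 = ⊤ := Submodule.eq_top_of_finrank_eq (by rw [h, hV1])
      rcases hTpr with hh | hh | hh
      · exact hh hS0
      · exact hh hS1
      · exact hh hTinf
  -- rational abbreviations (all explicit)
  have hm1 : (0 : ℚ) < 2 * (m : ℚ) + 1 := by positivity
  have hrkpos : (0 : ℚ) < (v0 : ℚ) + (v1 : ℚ) + 1 := by positivity
  have hρpos : (0 : ℚ) < (finrank ℂ T.S0 : ℚ) + (finrank ℂ T.S1 : ℚ) + 1 := by positivity
  have hc0 : (finrank ℂ T.S0 : ℚ) ≤ (v0 : ℚ) := by exact_mod_cast ht0le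
  have hc1 : (finrank ℂ T.S1 : ℚ) + 1 ≤ (v1 : ℚ) := by exact_mod_cast ht1lt
  have hgap : (1 : ℚ) ≤ ((v0 : ℚ) + (v1 : ℚ) + 1) -
      ((finrank ℂ T.S0 : ℚ) + (finrank ℂ T.S1 : ℚ) + 1) := by linarith
  have hrk3 : (3 : ℚ) ≤ (v0 : ℚ) + (v1 : ℚ) + 1 := by
    have : (1 : ℚ) ≤ (v0 : ℚ) := by exact_mod_cast hv0
    have : (1 : ℚ) ≤ (v1 : ℚ) := by exact_mod_cast hv1
    linarith [show (1:ℚ) ≤ (v0:ℚ) from by exact_mod_cast hv0]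
  have hwallQ : ((m : ℚ) + 1) * ((v0 : ℚ) - (finrank ℂ T.S0 : ℚ)) =
      (m : ℚ) * ((v1 : ℚ) - (finrank ℂ T.S1 : ℚ)) := by
    have h' := hTwall
    rw [hV0, hV1] at h'
    exact_mod_cast h'
  -- the key identity for the zeta-degree of T
  have hZ2 : (2 * (m : ℚ) + 1) *
        (ζ.1 * (finrank ℂ T.S0 : ℚ) + ζ.2.1 * (finrank ℂ T.S1 : ℚ) + ζ.2.2)
      = -(((v0 : ℚ) + (v1 : ℚ) + 1) -
          ((finrank ℂ T.S0 : ℚ) + (finrank ℂ T.S1 : ℚ) + 1)) *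
        ((m : ℚ) * ζ.1 + ((m : ℚ) + 1) * ζ.2.1) := by
    linear_combination (2 * (m : ℚ) + 1) * ha + (ζ.2.1 - ζ.1) * hwallQ
  have hZeq : ((v0 : ℚ) + (v1 : ℚ) + 1) *
        (ζ.1 * (finrank ℂ T.S0 : ℚ) + ζ.2.1 * (finrank ℂ T.S1 : ℚ) + ζ.2.2)
      = -(((v0 : ℚ) + (v1 : ℚ) + 1) -
          ((finrank ℂ T.S0 : ℚ) + (finrank ℂ T.S1 : ℚ) + 1)) *
        ((((v0 : ℚ) + (v1 : ℚ) + 1) / (2 * (m : ℚ) + 1)) *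
          ((m : ℚ) * ζ.1 + ((m : ℚ) + 1) * ζ.2.1)) := by
    have key : ((v0 : ℚ) + (v1 : ℚ) + 1) / (2 * (m : ℚ) + 1) * (2 * (m : ℚ) + 1) =
        (v0 : ℚ) + (v1 : ℚ) + 1 := div_mul_cancel₀ _ hm1.ne'
    linear_combination ((v0 : ℚ) + (v1 : ℚ) + 1) / (2 * (m : ℚ) + 1) * hZ2
      - (ζ.1 * (finrank ℂ T.S0 : ℚ) + ζ.2.1 * (finrank ℂ T.S1 : ℚ) + ζ.2.2) * key
  -- basic flag/finrank facts
  have hfk_le : ∀ k ∈ Finset.Icc 1 v1, (finrank ℂ ↥(T.S1 ⊓ F k) : ℚ) ≤ (k : ℚ) := by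
    intro k hk
    obtain ⟨hk1, hk2⟩ := Finset.mem_Icc.mp hk
    have h1 : finrank ℂ ↥(T.S1 ⊓ F k) ≤ finrank ℂ ↥(F k) := Submodule.finrank_mono inf_le_right
    rw [hF.dim k hk2] at h1
    exact_mod_cast h1
  -- the two mu's
  have hzdegT : T.zdeg ζ =
      ζ.1 * (finrank ℂ T.S0 : ℚ) + ζ.2.1 * (finrank ℂ T.S1 : ℚ) + ζ.2.2 := by
    simp only [ADHMSub.zdeg, htinf]
    push_cast
    ring
  have hrankT : T.rank = (finrank ℂ T.S0 : ℚ) + (finrank ℂ T.S1 : ℚ) + 1 := by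
    simp only [ADHMSub.rank, htinf]
    push_cast
    ring
  have hmuT : T.mu ζ n v1 F =
      ((ζ.1 * (finrank ℂ T.S0 : ℚ) + ζ.2.1 * (finrank ℂ T.S1 : ℚ) + ζ.2.2) +
        ∑ k ∈ Finset.Icc 1 v1, n k * (finrank ℂ ↥(T.S1 ⊓ F k) : ℚ)) /
      ((finrank ℂ T.S0 : ℚ) + (finrank ℂ T.S1 : ℚ) + 1) := by
    rw [ADHMSub.mu, hzdegT, hrankT]
  have hzdegX : (ADHMData.top X).zdeg ζ = 0 := by
    have hX0 : finrank ℂ (ADHMData.top X).S0 = v0 := by rw [← hV0]; exact finrank_top (R := ℂ) (M := V0)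
    have hX1 : finrank ℂ (ADHMData.top X).S1 = v1 := by rw [← hV1]; exact finrank_top (R := ℂ) (M := V1)
    have hXi : finrank ℂ (ADHMData.top X).Sinf = 1 := by rw [← hVinf]; exact finrank_top (R := ℂ) (M := Vinf)
    simp only [ADHMSub.zdeg, hX0, hX1, hXi]
    push_cast
    linarith [ha]
  have hrankX : (ADHMData.top X).rank = (v0 : ℚ) + (v1 : ℚ) + 1 := by
    have hX0 : finrank ℂ (ADHMData.top X).S0 = v0 := by rw [← hV0]; exact finrank_top (R := ℂ) (M := V0)
    have hX1 : finrank ℂ (ADHMData.top X).S1 = v1 := by rw [← hV1]; exact finrank_top (R := ℂ) (M := V1)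
    have hXi : finrank ℂ (ADHMData.top X).Sinf = 1 := by rw [← hVinf]; exact finrank_top (R := ℂ) (M := Vinf)
    simp only [ADHMSub.rank, hX0, hX1, hXi]
    push_cast
    ring
  have hsumX : ∑ k ∈ Finset.Icc 1 v1, n k * (finrank ℂ ↥((ADHMData.top X).S1 ⊓ F k) : ℚ)
      = ∑ k ∈ Finset.Icc 1 v1, (k : ℚ) * n k := by
    refine Finset.sum_congr rfl fun k hk => ?_
    obtain ⟨hk1, hk2⟩ := Finset.mem_Icc.mp hk
    have : (ADHMData.top X).S1 ⊓ F k = F k := by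
      simp only [ADHMData.top, top_inf_eq]
    rw [this, hF.dim k hk2]
    ring
  have hTot : ∑ k ∈ Finset.Icc 1 v1, (k : ℚ) * n k =
      (∑ i ∈ Finset.Icc 1 ℓ, (i : ℚ) * n i) + ∑ i ∈ Finset.Icc (ℓ + 1) v1, (i : ℚ) * n i :=
    icc_split_sum' (fun k => (k : ℚ) * n k) hℓ2
  have hmuX : (ADHMData.top X).mu ζ n v1 F =
      ((∑ i ∈ Finset.Icc 1 ℓ, (i : ℚ) * n i) + ∑ i ∈ Finset.Icc (ℓ + 1) v1, (i : ℚ) * n i) /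
      ((v0 : ℚ) + (v1 : ℚ) + 1) := by
    rw [ADHMSub.mu, hzdegX, hrankX, hsumX, hTot, zero_add]
  have hBnn : (0 : ℚ) ≤ ∑ i ∈ Finset.Icc (ℓ + 1) v1, (i : ℚ) * n i := by
    refine Finset.sum_nonneg fun k hk => ?_
    obtain ⟨hk1, hk2⟩ := Finset.mem_Icc.mp hk
    have := hn k (Finset.mem_Icc.mpr ⟨by omega, hk2⟩)
    positivity
  by_cases hle : F ℓ ≤ T.S1
  · -- case F^ℓ ≤ T1 : μ(X) < μ(T)
    have hSA : (∑ i ∈ Finset.Icc 1 ℓ, (i : ℚ) * n i) ≤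
        ∑ k ∈ Finset.Icc 1 v1, n k * (finrank ℂ ↥(T.S1 ⊓ F k) : ℚ) := by
      rw [icc_split_sum' (fun k => n k * (finrank ℂ ↥(T.S1 ⊓ F k) : ℚ)) hℓ2]
      have h1 : ∑ k ∈ Finset.Icc 1 ℓ, n k * (finrank ℂ ↥(T.S1 ⊓ F k) : ℚ) =
          ∑ i ∈ Finset.Icc 1 ℓ, (i : ℚ) * n i := by
        refine Finset.sum_congr rfl fun k hk => ?_
        obtain ⟨hk1, hk2⟩ := Finset.mem_Icc.mp hk
        have hFkT : F k ≤ T.S1 := (hFmono k ℓ hk2 hℓ2).trans hle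
        rw [inf_eq_right.mpr hFkT, hF.dim k (hk2.trans hℓ2)]
        ring
      have h2 : (0 : ℚ) ≤ ∑ k ∈ Finset.Icc (ℓ + 1) v1,
          n k * (finrank ℂ ↥(T.S1 ⊓ F k) : ℚ) := by
        refine Finset.sum_nonneg fun k hk => ?_
        obtain ⟨hk1, hk2⟩ := Finset.mem_Icc.mp hk
        have := hn k (Finset.mem_Icc.mpr ⟨by omega, hk2⟩)
        positivity
      rw [h1]
      linarith
    have hlt : (ADHMData.top X).mu ζ n v1 F < T.mu ζ n v1 F := by
      rw [hmuX, hmuT, div_lt_div_iff₀ hrkpos hρpos]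
      exact main_arith_pos _ _ _ _ _ _ _ hZeq hSA hd1 he1 hgap hrkpos hBnn
    refine ⟨hlt.ne', ?_⟩
    constructor
    · intro h
      exact absurd hlt (not_lt.mpr h.le)
    · intro h
      exact absurd hle h
  · -- case ¬ F^ℓ ≤ T1 : μ(T) < μ(X)
    have hfl : (finrank ℂ ↥(T.S1 ⊓ F ℓ) : ℚ) + 1 ≤ (ℓ : ℚ) := by
      have hltsub : T.S1 ⊓ F ℓ < F ℓ :=
        lt_of_le_of_ne inf_le_right (fun hh => hle (inf_eq_right.mp hh))
      have h1 := Submodule.finrank_lt_finrank_of_lt hltsub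
      rw [hF.dim ℓ hℓ2] at h1
      exact_mod_cast Nat.succ_le_of_lt h1
    have key : ∀ k ∈ Finset.Icc 1 v1,
        n k * (finrank ℂ ↥(T.S1 ⊓ F k) : ℚ) + (if k = ℓ then n ℓ else 0) ≤
          (k : ℚ) * n k := by
      intro k hk
      clear hle
      have hnk := hn k hk
      have hfk := hfk_le k hk
      by_cases hkl : k = ℓ
      · subst hkl
        simp only [if_pos rfl]
        exact pt_eq _ _ _ hfl hnk
      · simp only [if_neg hkl, add_zero]
        exact pt_ne _ _ _ hfk hnk
    have hsum := Finset.sum_le_sum key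
    rw [Finset.sum_add_distrib, Finset.sum_ite_eq' (Finset.Icc 1 v1) ℓ (fun _ => n ℓ),
      if_pos hℓ] at hsum
    have hSB : ∑ k ∈ Finset.Icc 1 v1, n k * (finrank ℂ ↥(T.S1 ⊓ F k) : ℚ) ≤
        (∑ i ∈ Finset.Icc 1 ℓ, (i : ℚ) * n i) +
          (∑ i ∈ Finset.Icc (ℓ + 1) v1, (i : ℚ) * n i) - n ℓ := by
      rw [← hTot]
      clear hle
      linarith
    have hlt : T.mu ζ n v1 F < (ADHMData.top X).mu ζ n v1 F := by
      rw [hmuX, hmuT, div_lt_div_iff₀ hρpos hrkpos]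
      exact main_arith_neg _ _ _ _ _ _ _ _ hZeq hSB hd1 hd2 he2 hgap hρpos (by clear hle; linarith) hBnn
    exact ⟨hlt.ne, ⟨fun _ => hle, fun _ => hlt⟩⟩
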